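/- Let P be an n-polytope with special m-simplex Σ with vertex set V(Σ), and let w ∉ aff(P) ⊂ ℝ^{n+1}. Then the pyramid pyr(P) = conv(P ∪ {w}) is an (n+1)-polytope and conv(V(Σ) ∪ {w}) is a special (m+1)-simplex of pyr(P). -/

import Mathlib

open Set Module

/-- A (possibly empty or improper) face of `P`: the set of maximizers of a linear
functional over `P` (at level `α`, an upper bound of the functional on `P`). -/
def IsFace {E : Type*} [AddCommGroup E] [Module ℝ E] (P F : Set E) : Prop :=
  ∃ (c : E →ₗ[ℝ] ℝ) (α : ℝ), (∀ x ∈ P, c x ≤ α) ∧ F = {x ∈ P | c x = α}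

/-- A facet of the polytope `P`: a nonempty proper face of dimension `dim P - 1`. -/
def IsFacet {E : Type*} [AddCommGroup E] [Module ℝ E] (P F : Set E) : Prop :=
  IsFace P F ∧ F ≠ P ∧ F.Nonempty ∧
    Module.finrank ℝ (vectorSpan ℝ F) + 1 = Module.finrank ℝ (vectorSpan ℝ P)

/-- The number of nonempty proper faces of `P` of dimension `i`. -/
noncomputable def nF {E : Type*} [AddCommGroup E] [Module ℝ E] (P : Set E) (i : ℕ) : ℕ :=
  Set.ncard {F : Set E | IsFace P F ∧ F ≠ P ∧ F.Nonempty ∧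
    Module.finrank ℝ (vectorSpan ℝ F) = i}

private lemma finrank_vectorSpan_insert_of_not_mem
    {E : Type*} [AddCommGroup E] [Module ℝ E] [FiniteDimensional ℝ E]
    {S : Set E} (hS : S.Nonempty) {w : E} (hw : w ∉ affineSpan ℝ S) :
    Module.finrank ℝ (vectorSpan ℝ (insert w S)) = Module.finrank ℝ (vectorSpan ℝ S) + 1 := by
  obtain ⟨x0, hx0⟩ := hS
  have hx0' : x0 ∈ affineSpan ℝ S := subset_affineSpan ℝ S hx0
  have h1 : vectorSpan ℝ (insert w S)
      = Submodule.span ℝ {w -ᵥ x0} ⊔ (affineSpan ℝ S).direction := by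
    rw [← direction_affineSpan, ← affineSpan_insert_affineSpan,
      AffineSubspace.direction_affineSpan_insert hx0']
  have hwx : w -ᵥ x0 ∉ (affineSpan ℝ S).direction := by
    intro h
    exact hw ((AffineSubspace.vsub_right_mem_direction_iff_mem hx0' w).1 h)
  have hne : w -ᵥ x0 ≠ 0 := by
    intro h; apply hwx; rw [h]; exact Submodule.zero_mem _
  have hinf : Submodule.span ℝ {w -ᵥ x0} ⊓ (affineSpan ℝ S).direction = ⊥ := by
    rw [Submodule.eq_bot_iff]
    rintro y ⟨hy1, hy2⟩
    obtain ⟨a, rfl⟩ := Submodule.mem_span_singleton.1 hy1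
    rcases eq_or_ne a 0 with rfl | ha
    · simp
    · exfalso
      apply hwx
      have := Submodule.smul_mem _ a⁻¹ hy2
      rwa [smul_smul, inv_mul_cancel₀ ha, one_smul] at this
  have hsum := Submodule.finrank_sup_add_finrank_inf_eq
    (Submodule.span ℝ {w -ᵥ x0}) (affineSpan ℝ S).direction
  rw [hinf, finrank_bot, finrank_span_singleton hne] at hsum
  rw [h1, ← direction_affineSpan]
  omega

private lemma vectorSpan_le_ker {E : Type*} [AddCommGroup E] [Module ℝ E]
    (c : E →ₗ[ℝ] ℝ) (α : ℝ) {F : Set E} (hF : ∀ x ∈ F, c x = α) :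
    vectorSpan ℝ F ≤ LinearMap.ker c := by
  rw [vectorSpan_def, Submodule.span_le]
  rintro y ⟨a, ha, b, hb, rfl⟩
  simp [LinearMap.mem_ker, vsub_eq_sub, map_sub, hF a ha, hF b hb]

private def lastComplEmb (k : ℕ) : {y : Fin (k + 1) // y ≠ Fin.last k} ↪ Fin k where
  toFun x := x.1.castPred x.2
  inj' x y h := Subtype.ext (by
    have h2 := congrArg Fin.castSucc h
    simpa [Fin.castSucc_castPred] using h2)

/-- Taking the pyramid over an $n$-polytope $P$ with special $m$-simplex $\Sigma$
(apex $w$ outside the affine hull of $P$) yields an $(n+1)$-polytope in which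
$\mathrm{conv}(V(\Sigma) \cup \{w\})$ is a special $(m+1)$-simplex. -/
theorem pyramid_special_simplex {n m : ℕ}
    (V : Finset (Fin (n + 1) → ℝ)) (P : Set (Fin (n + 1) → ℝ))
    (hP : P = convexHull ℝ (V : Set (Fin (n + 1) → ℝ)))
    (hdim : Module.finrank ℝ (vectorSpan ℝ P) = n)
    (v : Fin (m + 1) → (Fin (n + 1) → ℝ)) (hv : AffineIndependent ℝ v)
    (hvV : ∀ i, v i ∈ V)
    (hspec : ∀ F : Set (Fin (n + 1) → ℝ), IsFacet P F → ∃! i, v i ∉ F)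
    (w : Fin (n + 1) → ℝ) (hw : w ∉ affineSpan ℝ P) :
    Module.finrank ℝ (vectorSpan ℝ (convexHull ℝ (P ∪ {w}))) = n + 1 ∧
    AffineIndependent ℝ (Fin.snoc v w : Fin (m + 1 + 1) → (Fin (n + 1) → ℝ)) ∧
    ∀ F : Set (Fin (n + 1) → ℝ), IsFacet (convexHull ℝ (P ∪ {w})) F →
      ∃! i : Fin (m + 1 + 1), (Fin.snoc v w : Fin (m + 1 + 1) → (Fin (n + 1) → ℝ)) i ∉ F := by
  have hPconv : Convex ℝ P := hP ▸ convex_convexHull ℝ _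
  have hVP : (V : Set (Fin (n + 1) → ℝ)) ⊆ P := hP ▸ subset_convexHull ℝ _
  have hvP : ∀ i, v i ∈ P := fun i => hVP (hvV i)
  have hPne : P.Nonempty := ⟨v 0, hvP 0⟩
  set Q := convexHull ℝ (P ∪ {w}) with hQdef
  have hQ : Q = convexJoin ℝ {w} P := by
    rw [hQdef, Set.union_singleton, convexHull_insert hPne, hPconv.convexHull_eq]
  have hmemQ : ∀ x, x ∈ Q ↔
      ∃ z ∈ P, ∃ a b : ℝ, 0 ≤ a ∧ 0 ≤ b ∧ a + b = 1 ∧ a • w + b • z = x := by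
    intro x
    rw [hQ, mem_convexJoin]
    constructor
    · rintro ⟨y, hy, z, hz, a, b, ha, hb, hab, rfl⟩
      rw [mem_singleton_iff] at hy
      exact ⟨z, hz, a, b, ha, hb, hab, by rw [hy]⟩
    · rintro ⟨z, hz, a, b, ha, hb, hab, rfl⟩
      exact ⟨w, rfl, z, hz, a, b, ha, hb, hab, rfl⟩
  have hPQ : P ⊆ Q := (Set.subset_union_left).trans (subset_convexHull ℝ _)
  have hwQ : w ∈ Q := subset_convexHull ℝ _ (by simp)
  have hwP : w ∉ P := fun h => hw (subset_affineSpan ℝ P h)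
  have hdimQ : Module.finrank ℝ (vectorSpan ℝ Q) = n + 1 := by
    have h2 : vectorSpan ℝ Q = vectorSpan ℝ (insert w P) := by
      rw [hQdef, ← direction_affineSpan, ← direction_affineSpan, affineSpan_convexHull,
        Set.union_singleton]
    rw [h2, finrank_vectorSpan_insert_of_not_mem hPne hw, hdim]
  have hAI : AffineIndependent ℝ (Fin.snoc v w : Fin (m + 1 + 1) → (Fin (n + 1) → ℝ)) := by
    apply AffineIndependent.affineIndependent_of_notMem_span (i := Fin.last (m + 1))
    · have hcomp : (fun x : {y : Fin (m + 1 + 1) // y ≠ Fin.last (m + 1)} =>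
          (Fin.snoc v w : Fin (m + 1 + 1) → (Fin (n + 1) → ℝ)) x) = v ∘ lastComplEmb (m + 1) := by
        funext x
        obtain ⟨x1, hx1⟩ := x
        obtain ⟨i, rfl⟩ : ∃ i : Fin (m + 1), i.castSucc = x1 :=
          ⟨x1.castPred hx1, Fin.castSucc_castPred x1 hx1⟩
        simp [lastComplEmb, Fin.snoc_castSucc, Fin.castPred_castSucc]
        rfl
      rw [hcomp]
      exact hv.comp_embedding _
    · rw [Fin.snoc_last]
      intro hmem
      apply hw
      have hsub : (Fin.snoc v w : Fin (m + 1 + 1) → (Fin (n + 1) → ℝ)) ''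
          {x | x ≠ Fin.last (m + 1)} ⊆ P := by
        rintro _ ⟨x, hx, rfl⟩
        obtain ⟨i, rfl⟩ : ∃ i : Fin (m + 1), i.castSucc = x :=
          ⟨x.castPred hx, Fin.castSucc_castPred x hx⟩
        rw [Fin.snoc_castSucc]; exact hvP i
      exact affineSpan_mono ℝ hsub hmem
  refine ⟨hdimQ, hAI, ?_⟩
  intro F hFfacet
  obtain ⟨⟨c, α, hcα, hFdef⟩, hFQ, hFne, hFdim⟩ := hFfacet
  have hdimFn : Module.finrank ℝ (vectorSpan ℝ F) = n := by rw [hdimQ] at hFdim; omega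
  have hcw : c w ≤ α := hcα w hwQ
  rcases lt_or_eq_of_le hcw with hlt | heq
  · -- apex not on the facet: F = P
    have hFP' : F ⊆ P := by
      intro x hx
      rw [hFdef] at hx
      obtain ⟨hxQ, hxα⟩ := hx
      obtain ⟨z, hz, a, b, ha, hb, hab, rfl⟩ := (hmemQ _).1 hxQ
      rcases eq_or_lt_of_le ha with rfl | ha'
      · have hb1 : b = 1 := by linarith
        simpa [hb1] using hz
      · exfalso
        have h1 : a * c w < a * α := mul_lt_mul_of_pos_left hlt ha'
        have h2 : b * c z ≤ b * α := mul_le_mul_of_nonneg_left (hcα z (hPQ hz)) hb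
        have h4 : a * α + b * α = α := by rw [← add_mul, hab, one_mul]
        have h3 : c (a • w + b • z) < α := by
          rw [map_add, map_smul, map_smul, smul_eq_mul, smul_eq_mul]
          linarith
        rw [hxα] at h3
        exact lt_irrefl _ h3
    have hFP : F = P := by
      by_contra hne
      obtain ⟨p, hp, hpF⟩ := Set.exists_of_ssubset (hFP'.ssubset_of_ne hne)
      obtain ⟨x0, hx0⟩ := hFne
      have hvs : vectorSpan ℝ F = vectorSpan ℝ P :=
        Submodule.eq_of_le_of_finrank_le (vectorSpan_mono ℝ hFP') (by rw [hdimFn, hdim])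
      have hcF : ∀ x ∈ F, c x = α := by
        intro x hx; rw [hFdef] at hx; exact hx.2
      have hker := vectorSpan_le_ker c α hcF
      have hmem : p -ᵥ x0 ∈ vectorSpan ℝ F := by
        rw [hvs]; exact vsub_mem_vectorSpan ℝ hp (hFP' hx0)
      have hpα : c p = α := by
        have h0 := hker hmem
        rw [LinearMap.mem_ker, vsub_eq_sub, map_sub, sub_eq_zero] at h0
        rw [h0, hcF x0 hx0]
      exact hpF (by rw [hFdef]; exact ⟨hPQ hp, hpα⟩)
    refine ⟨Fin.last (m + 1), ?_, ?_⟩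
    · show (Fin.snoc v w : Fin (m + 1 + 1) → (Fin (n + 1) → ℝ)) (Fin.last (m + 1)) ∉ F
      rw [Fin.snoc_last, hFP]; exact hwP
    · intro j hj
      have hj' : (Fin.snoc v w : Fin (m + 1 + 1) → (Fin (n + 1) → ℝ)) j ∉ F := hj
      rcases Fin.eq_castSucc_or_eq_last j with ⟨i, rfl⟩ | rfl
      · rw [Fin.snoc_castSucc, hFP] at hj'
        exact absurd (hvP i) hj'
      · rfl
  · -- apex on the facet
    set F' := {x ∈ P | c x = α} with hF'def
    have hwF : w ∈ F := by rw [hFdef]; exact ⟨hwQ, heq⟩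
    have hF'F : F' ⊆ F := fun x hx => by rw [hFdef]; exact ⟨hPQ hx.1, hx.2⟩
    have hFconv : F = convexHull ℝ (insert w F') := by
      apply Set.Subset.antisymm
      · intro x hx
        rw [hFdef] at hx
        obtain ⟨hxQ, hxα⟩ := hx
        obtain ⟨z, hz, a, b, ha, hb, hab, rfl⟩ := (hmemQ _).1 hxQ
        rcases eq_or_lt_of_le hb with rfl | hb'
        · have ha1 : a = 1 := by linarith
          have hxw : a • w + (0 : ℝ) • z = w := by rw [ha1]; simp
          rw [hxw]
          exact subset_convexHull ℝ _ (mem_insert _ _)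
        · have hzα : c z = α := by
            have hc : c (a • w + b • z) = a * c w + b * c z := by
              rw [map_add, map_smul, map_smul, smul_eq_mul, smul_eq_mul]
            rw [hc, ← heq] at hxα
            have h5 : b * c z = (1 - a) * c w := by linarith
            have h6 : (1 - a : ℝ) = b := by linarith
            rw [h6] at h5
            exact (mul_left_cancel₀ (ne_of_gt hb') h5).trans heq
          have hseg : a • w + b • z ∈ segment ℝ w z := ⟨a, b, ha, hb, hab, rfl⟩
          exact (convex_convexHull ℝ _).segment_subset
            (subset_convexHull ℝ _ (mem_insert _ _))
            (subset_convexHull ℝ _ (mem_insert_of_mem _ (show z ∈ F' from ⟨hz, hzα⟩)))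
            hseg
      · rw [hFdef]
        apply convexHull_min
        · rintro x (rfl | hx)
          · exact ⟨hwQ, heq⟩
          · exact ⟨hPQ hx.1, hx.2⟩
        · have hset : {x ∈ Q | c x = α} = Q ∩ {x | c x = α} := rfl
          rw [hset]
          exact (convex_convexHull ℝ _).inter (convex_hyperplane c.isLinear α)
    by_cases hF'ne : F'.Nonempty
    · have hwF' : w ∉ affineSpan ℝ F' := fun h => hw (affineSpan_mono ℝ (sep_subset _ _) h)
      have hdimF' : Module.finrank ℝ (vectorSpan ℝ F') + 1 = n := by
        have hvsF : vectorSpan ℝ F = vectorSpan ℝ (insert w F') := by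
          rw [hFconv, ← direction_affineSpan, ← direction_affineSpan, affineSpan_convexHull]
        rw [hvsF, finrank_vectorSpan_insert_of_not_mem hF'ne hwF'] at hdimFn
        omega
      have hfacet : IsFacet P F' := by
        refine ⟨⟨c, α, fun x hx => hcα x (hPQ hx), rfl⟩, ?_, hF'ne, by rw [hdimF', hdim]⟩
        intro h
        rw [h, hdim] at hdimF'
        omega
      obtain ⟨i, hi, hiu⟩ := hspec F' hfacet
      refine ⟨i.castSucc, ?_, ?_⟩
      · show (Fin.snoc v w : Fin (m + 1 + 1) → (Fin (n + 1) → ℝ)) (Fin.castSucc i) ∉ F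
        intro hmem
        rw [Fin.snoc_castSucc] at hmem
        rw [hFdef] at hmem
        exact hi ⟨hvP i, hmem.2⟩
      · intro j hj
        have hj' : (Fin.snoc v w : Fin (m + 1 + 1) → (Fin (n + 1) → ℝ)) j ∉ F := hj
        rcases Fin.eq_castSucc_or_eq_last j with ⟨i', rfl⟩ | rfl
        · rw [Fin.snoc_castSucc] at hj'
          have hni : v i' ∉ F' := fun h => hj' (hF'F h)
          rw [hiu i' hni]
        · rw [Fin.snoc_last] at hj'
          exact absurd hwF hj'
    · have hFw : F = {w} := by
        rw [hFconv, not_nonempty_iff_eq_empty.1 hF'ne, insert_empty_eq, convexHull_singleton]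
      have hn0 : n = 0 := by
        rw [hFw, vectorSpan_singleton] at hdimFn
        simpa using hdimFn.symm
      have hm0 : m = 0 := by
        have h1 : Module.finrank ℝ (vectorSpan ℝ (Set.range v)) = m :=
          hv.finrank_vectorSpan (by simp)
        have h2 : vectorSpan ℝ (Set.range v) ≤ vectorSpan ℝ P :=
          vectorSpan_mono ℝ (Set.range_subset_iff.2 hvP)
        have h3 := Submodule.finrank_mono h2
        omega
      subst hm0
      refine ⟨(0 : Fin 1).castSucc, ?_, ?_⟩
      · show (Fin.snoc v w : Fin (0 + 1 + 1) → (Fin (n + 1) → ℝ)) ((0 : Fin 1).castSucc) ∉ F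
        rw [Fin.snoc_castSucc, hFw]
        intro hmem
        rw [mem_singleton_iff] at hmem
        exact hwP (hmem ▸ hvP 0)
      · intro j hj
        have hj' : (Fin.snoc v w : Fin (0 + 1 + 1) → (Fin (n + 1) → ℝ)) j ∉ F := hj
        rcases Fin.eq_castSucc_or_eq_last j with ⟨i', rfl⟩ | rfl
        · have hi0 : i' = 0 := Subsingleton.elim _ _
          rw [hi0]
        · rw [Fin.snoc_last] at hj'
          exact absurd hwF hj'
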